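/- Let a > b > 0 and q(z) = ((a+b)/2) e^{iz} + ((a−b)/2) e^{−iz}. Suppose t ∈ ℂ with Re t ∈ [−π, π) and |Im t| < log((a+b)/(a−b)), and s ∈ [−π, π) is real. If q(t) = q(s), then t = s. -/

import Mathlib

open Complex Real

/-- The complexified ellipse parametrization `q(z) = ((a+b)/2) e^{iz} + ((a-b)/2) e^{-iz}`
satisfies the injectivity condition (G) on the strip `|Im z| < log((a+b)/(a-b))`. -/
theorem ellipse_param_condition_G (a b : ℝ) (hab : a > b) (hb : b > 0)
    (t : ℂ) (ht₁ : -π ≤ t.re) (ht₂ : t.re < π)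
    (ht₃ : |t.im| < Real.log ((a + b) / (a - b)))
    (s : ℝ) (hs₁ : -π ≤ s) (hs₂ : s < π)
    (h : (((a + b) / 2 : ℝ) : ℂ) * Complex.exp (Complex.I * t)
          + (((a - b) / 2 : ℝ) : ℂ) * Complex.exp (-Complex.I * t)
        = (((a + b) / 2 : ℝ) : ℂ) * Complex.exp (Complex.I * s)
          + (((a - b) / 2 : ℝ) : ℂ) * Complex.exp (-Complex.I * s)) :
    t = (s : ℂ) := by
  have ha : (0:ℝ) < a + b := by linarith
  have hab' : (0:ℝ) < a - b := by linarith
  set u := Complex.exp (Complex.I * t) with hu_def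
  set v := Complex.exp (Complex.I * (s:ℂ)) with hv_def
  have hu : u ≠ 0 := Complex.exp_ne_zero _
  have hv : v ≠ 0 := Complex.exp_ne_zero _
  have h' : (((a + b) / 2 : ℝ) : ℂ) * u + (((a - b) / 2 : ℝ) : ℂ) * u⁻¹
      = (((a + b) / 2 : ℝ) : ℂ) * v + (((a - b) / 2 : ℝ) : ℂ) * v⁻¹ := by
    rw [show (-Complex.I*t) = -(Complex.I*t) by ring,
      show (-Complex.I*(s:ℂ)) = -(Complex.I*(s:ℂ)) by ring,
      Complex.exp_neg, Complex.exp_neg] at h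
    exact h
  have key : (u - v) * ((((a + b) / 2 : ℝ) : ℂ) * u * v - (((a - b) / 2 : ℝ) : ℂ)) = 0 := by
    push_cast
    push_cast at h'
    field_simp at h'
    linear_combination h' / 2
  rcases mul_eq_zero.mp key with h1 | h2
  · -- u = v
    have huv : Complex.exp (Complex.I * t) = Complex.exp (Complex.I * (s:ℂ)) :=
      sub_eq_zero.mp h1
    obtain ⟨n, hn⟩ := Complex.exp_eq_exp_iff_exists_int.mp huv
    have hts : t = (s:ℂ) + n * (2 * π) := by
      have : Complex.I * t = Complex.I * ((s:ℂ) + n * (2*π)) := by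
        rw [hn]; ring
      exact mul_left_cancel₀ Complex.I_ne_zero this
    have hre : t.re = s + n * (2 * π) := by
      rw [hts]; simp
    have hn0 : n = 0 := by
      have h2p : (0:ℝ) < π := Real.pi_pos
      have hlt : (n:ℝ) * (2*π) < 2*π := by nlinarith [hre]
      have hgt : -(2*π) < (n:ℝ) * (2*π) := by nlinarith [hre]
      have : -1 < (n:ℝ) ∧ (n:ℝ) < 1 := by
        constructor <;> nlinarith
      have h1' : -1 < n := by exact_mod_cast this.1
      have h2' : n < 1 := by exact_mod_cast this.2
      omega
    rw [hts, hn0]; push_cast; ring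
  · -- A*u*v = B, contradiction
    exfalso
    have habs := congrArg (fun z : ℂ => ‖z‖) (sub_eq_zero.mp h2)
    have hA : ‖(((a + b) / 2 : ℝ) : ℂ)‖ = (a+b)/2 := by
      rw [Complex.norm_real, Real.norm_eq_abs, abs_of_pos (by linarith : (0:ℝ) < (a+b)/2)]
    have hB : ‖(((a - b) / 2 : ℝ) : ℂ)‖ = (a-b)/2 := by
      rw [Complex.norm_real, Real.norm_eq_abs, abs_of_pos (by linarith : (0:ℝ) < (a-b)/2)]
    have hAu : ‖u‖ = Real.exp (-t.im) := by
      rw [hu_def, Complex.norm_exp]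
      congr 1
      simp [Complex.mul_re]
    have hAv : ‖v‖ = 1 := by
      rw [hv_def, Complex.norm_exp]
      simp [Complex.mul_re]
    simp only [norm_mul] at habs
    rw [hA, hB, hAu, hAv, mul_one] at habs
    have hexp : Real.exp (-t.im) = (a-b)/(a+b) := by
      field_simp at habs ⊢
      linarith
    have him : -t.im = Real.log ((a-b)/(a+b)) := by
      rw [← hexp, Real.log_exp]
    have hlog : Real.log ((a-b)/(a+b)) = - Real.log ((a+b)/(a-b)) := by
      rw [← Real.log_inv]
      congr 1
      field_simp
    have : t.im = Real.log ((a+b)/(a-b)) := by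
      rw [hlog] at him; linarith
    have := le_abs_self t.im
    linarith
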